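/- Let A ⊆ S_n be a subgroup of the symmetric group, identified with a set of n×n permutation matrices in ℝ^{n×n}. If A is permutation summable, then the vanishing ideal I_A of A (as a finite subset of ℝ^{n×n}) is TH₁-exact. -/

import Mathlib

open MvPolynomial

/-- A polynomial `h` is `k`-sos mod a set `I` of polynomials if
`h - ∑ gᵢ² ∈ I` for some polynomials `gᵢ` of degree at most `k`. -/
def IsKSos {σ : Type*} (I : Set (MvPolynomial σ ℝ)) (k : ℕ) (h : MvPolynomial σ ℝ) : Prop :=
  ∃ (r : ℕ) (g : Fin r → MvPolynomial σ ℝ),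
    (∀ i, (g i).totalDegree ≤ k) ∧ h - ∑ i, g i ^ 2 ∈ I

/-- The `k`-th theta body of `I`: the points where every linear polynomial that is
`k`-sos mod `I` is nonnegative. -/
def thetaBody {σ : Type*} (I : Set (MvPolynomial σ ℝ)) (k : ℕ) : Set (σ → ℝ) :=
  {p | ∀ l : MvPolynomial σ ℝ, l.totalDegree ≤ 1 → IsKSos I k l → 0 ≤ eval p l}

/-- The real variety of a set of polynomials. -/
def realVariety {σ : Type*} (I : Set (MvPolynomial σ ℝ)) : Set (σ → ℝ) :=
  {x | ∀ f ∈ I, eval x f = 0}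

/-- The real radical of a set of polynomials:
all `f` with `f^(2m) + ∑ gᵢ² ∈ I` for some `m` and some `gᵢ`. -/
def realRadical {σ : Type*} (I : Set (MvPolynomial σ ℝ)) : Set (MvPolynomial σ ℝ) :=
  {f | ∃ (m r : ℕ) (g : Fin r → MvPolynomial σ ℝ), f ^ (2 * m) + ∑ i, g i ^ 2 ∈ I}

/-- The permutation matrix of `σ ∈ S_n`, viewed as a point of `ℝ^{n×n}`. -/
def permMat {n : ℕ} (σ : Equiv.Perm (Fin n)) : Fin n × Fin n → ℝ :=
  fun p => if σ p.2 = p.1 then 1 else 0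

/-- A subgroup `A ⊆ S_n` is permutation summable if whenever `P₁, …, P_m ∈ A` are such that all
entries of `P₁ + ⋯ + P_m - Id` are nonnegative, this matrix is a sum of matrices in `A`. -/
def PermutationSummable {n : ℕ} (A : Subgroup (Equiv.Perm (Fin n))) : Prop :=
  ∀ (m : ℕ) (P : Fin m → A),
    (∀ p : Fin n × Fin n, 0 ≤ ∑ i, permMat (P i : Equiv.Perm (Fin n)) p - permMat 1 p) →
    ∃ (r : ℕ) (Q : Fin r → A),
      (fun p => ∑ i, permMat (P i : Equiv.Perm (Fin n)) p - permMat 1 p) =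
        fun p => ∑ j, permMat (Q j : Equiv.Perm (Fin n)) p



open MvPolynomial


lemma permMat_nonneg {n : ℕ} (σ : Equiv.Perm (Fin n)) (p : Fin n × Fin n) :
    0 ≤ permMat σ p := by
  unfold permMat; split <;> norm_num

lemma permMat_sq {n : ℕ} (σ : Equiv.Perm (Fin n)) (p : Fin n × Fin n) :
    permMat σ p ^ 2 = permMat σ p := by
  unfold permMat; split <;> norm_num

lemma permMat_mul {n : ℕ} (σ ρ : Equiv.Perm (Fin n)) (p : Fin n × Fin n) :
    permMat (σ * ρ) p = permMat σ (p.1, ρ p.2) := by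
  simp only [permMat, Equiv.Perm.mul_apply]
  rfl

lemma permMat_row_sum {n : ℕ} (σ : Equiv.Perm (Fin n)) (j : Fin n) :
    ∑ i : Fin n, permMat σ (i, j) = 1 := by
  simp only [permMat]
  rw [Finset.sum_ite_eq (Finset.univ) (σ j) (fun _ => (1:ℝ))]
  simp

/-- A monomial of a polynomial with total degree at most 1 is constant or a variable. -/
lemma monomial_classify {ι : Type*} (m : ι →₀ ℕ) (hm : (m.sum fun _ e => e) ≤ 1) :
    m = 0 ∨ ∃ s : ι, m = Finsupp.single s 1 := by
  classical
  rcases eq_or_ne m 0 with h | h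
  · exact Or.inl h
  · right
    obtain ⟨s, hs⟩ := Finsupp.ne_iff.mp h
    simp only [Finsupp.coe_zero, Pi.zero_apply] at hs
    have hs' : s ∈ m.support := Finsupp.mem_support_iff.mpr hs
    have hcard : m.support.card ≤ 1 := by
      have h1 : m.support.card * 1 ≤ m.support.sum m := by
        rw [mul_one]
        have := Finset.card_nsmul_le_sum m.support m 1 (fun i hi => by
          have := Finsupp.mem_support_iff.mp hi; omega)
        simpa using this
      have : m.support.sum m ≤ 1 := by
        simpa [Finsupp.sum] using hm
      omega
    have hsupp : m.support = {s} := by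
      apply Finset.eq_singleton_iff_unique_mem.mpr
      refine ⟨hs', fun y hy => ?_⟩
      by_contra hne
      have : ({y, s} : Finset ι).card ≤ m.support.card := by
        apply Finset.card_le_card
        intro a ha; simp at ha; rcases ha with rfl | rfl <;> assumption
      rw [Finset.card_pair hne] at this
      omega
    have hms : m s = 1 := by
      have : m.sum (fun _ e => e) = m s := by
        rw [Finsupp.sum, hsupp, Finset.sum_singleton]
      have h1 : 1 ≤ m s := by omega
      omega
    exact ⟨s, by
      ext a
      rcases eq_or_ne a s with rfl | hne
      · simp [hms]
      · have : a ∉ m.support := by rw [hsupp]; simp [hne]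
        simp [Finsupp.notMem_support_iff.mp this, Finsupp.single_apply, (Ne.symm hne)]⟩

/-- Evaluation of a polynomial of total degree at most 1. -/
lemma eval_deg_le_one {ι : Type*} [Fintype ι] [DecidableEq ι]
    (l : MvPolynomial ι ℝ) (hl : l.totalDegree ≤ 1) (x : ι → ℝ) :
    eval x l = l.coeff 0 + ∑ s : ι, l.coeff (Finsupp.single s 1) * x s := by
  classical
  rw [eval_eq]
  have hsub : l.support ⊆ insert 0 (Finset.univ.image fun s : ι => Finsupp.single s 1) := by
    intro m hm
    rcases monomial_classify m ((MvPolynomial.le_totalDegree hm).trans hl) with rfl | ⟨s, rfl⟩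
    · simp
    · simp
  rw [Finset.sum_subset hsub]
  · rw [Finset.sum_insert (by
      simp only [Finset.mem_image, not_exists]
      rintro s ⟨_, h⟩
      have := congrArg (fun f => f s) h
      simp [Finsupp.single_apply] at this)]
    congr 1
    · simp
    · rw [Finset.sum_image (by
        intro a _ b _ h
        have := congrArg (fun f => f a) h
        simp [Finsupp.single_apply] at this
        exact this.symm)]
      apply Finset.sum_congr rfl
      intro s _
      rw [Finsupp.support_single_ne_zero s one_ne_zero]
      simp
  · intro m _ hm
    rw [MvPolynomial.notMem_support_iff.mp hm, zero_mul]

lemma eval_affine {ι : Type*} [Fintype ι] [DecidableEq ι]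
    (l : MvPolynomial ι ℝ) (hl : l.totalDegree ≤ 1) (x y : ι → ℝ) (a b : ℝ)
    (hab : a + b = 1) :
    eval (a • x + b • y) l = a * eval x l + b * eval y l := by
  rw [eval_deg_le_one l hl, eval_deg_le_one l hl, eval_deg_le_one l hl]
  have : ∑ s : ι, l.coeff (Finsupp.single s 1) * (a • x + b • y) s
      = a * ∑ s : ι, l.coeff (Finsupp.single s 1) * x s
        + b * ∑ s : ι, l.coeff (Finsupp.single s 1) * y s := by
    rw [Finset.mul_sum, Finset.mul_sum, ← Finset.sum_add_distrib]
    apply Finset.sum_congr rfl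
    intro s _
    simp only [Pi.add_apply, Pi.smul_apply, smul_eq_mul]
    ring
  rw [this]
  have hc : coeff 0 l = (a + b) * coeff 0 l := by rw [hab, one_mul]
  nlinarith [hc]


open scoped RealInnerProductSpace

/-- A cone generated by finitely many vectors, all on the strictly positive side of a
hyperplane, is closed. -/
lemma isClosed_finite_cone {E : Type*} [NormedAddCommGroup E] [InnerProductSpace ℝ E]
    [FiniteDimensional ℝ E] {κ : Type*} [Fintype κ] (g : κ → E) (w : E)
    (hw : ∀ i, 0 < ⟪g i, w⟫) :
    IsClosed {x : E | ∃ t : κ → ℝ, (∀ i, 0 ≤ t i) ∧ x = ∑ i, t i • g i} := by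
  classical
  rcases isEmpty_or_nonempty κ with hκ | hκ
  · have : {x : E | ∃ t : κ → ℝ, (∀ i, 0 ≤ t i) ∧ x = ∑ i, t i • g i} = {0} := by
      ext x
      simp [Finset.univ_eq_empty]
    rw [this]
    exact isClosed_singleton
  · set m : ℝ := Finset.univ.inf' (Finset.univ_nonempty) (fun i => ⟪g i, w⟫) with hm
    have hm0 : 0 < m := by
      rw [hm]
      apply (Finset.lt_inf'_iff _).mpr
      intro i _
      exact hw i
    apply IsSeqClosed.isClosed
    intro q x hq hx
    choose t ht hqt using hq
    -- bound on the coefficients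
    have hB : BddAbove (Set.range fun k => ⟪q k, w⟫) := by
      apply Filter.Tendsto.bddAbove_range
      exact (Filter.Tendsto.inner hx tendsto_const_nhds)
    obtain ⟨B, hB⟩ := hB
    have htB : ∀ k i, t k i ≤ B / m := by
      intro k i
      have h1 : t k i * m ≤ ⟪q k, w⟫ := by
        rw [hqt k, sum_inner]
        have : t k i * m ≤ t k i * ⟪g i, w⟫ := by
          apply mul_le_mul_of_nonneg_left _ (ht k i)
          rw [hm]
          exact Finset.inf'_le _ (Finset.mem_univ i)
        refine le_trans this ?_
        have := Finset.single_le_sum (f := fun j => ⟪t k j • g j, w⟫)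
          (fun j _ => by
            simp only [real_inner_smul_left]
            exact mul_nonneg (ht k j) (hw j).le) (Finset.mem_univ i)
        simp only [real_inner_smul_left] at this ⊢
        exact this
      have h2 : ⟪q k, w⟫ ≤ B := hB (Set.mem_range_self k)
      rw [div_eq_inv_mul, ← mul_le_mul_iff_of_pos_right hm0]
      calc t k i * m ≤ B := le_trans h1 h2
        _ = m⁻¹ * B * m := by field_simp
    -- the coefficients live in a compact box
    have hbox : ∀ k, t k ∈ Set.Icc (0 : κ → ℝ) (fun _ => B / m) := by
      intro k
      constructor
      · intro i; exact ht k i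
      · intro i; exact htB k i
    have hcompact : IsCompact (Set.Icc (0 : κ → ℝ) (fun _ => B / m)) := isCompact_Icc
    obtain ⟨tl, htl, φ, hφ, htend⟩ := hcompact.tendsto_subseq hbox
    refine ⟨tl, fun i => htl.1 i, ?_⟩
    have h1 : Filter.Tendsto (fun k => q (φ k)) Filter.atTop (nhds x) :=
      hx.comp hφ.tendsto_atTop
    have h2 : Filter.Tendsto (fun k => q (φ k)) Filter.atTop (nhds (∑ i, tl i • g i)) := by
      have : ∀ k, q (φ k) = ∑ i, t (φ k) i • g i := fun k => hqt (φ k)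
      rw [funext this]
      apply tendsto_finset_sum
      intro i _
      exact Filter.Tendsto.smul ((tendsto_pi_nhds.mp htend) i) tendsto_const_nhds
    exact tendsto_nhds_unique h1 h2


section ListDecomp

variable {n : ℕ} {A : Subgroup (Equiv.Perm (Fin n))}

lemma list_map_sum_eq (L : List ↥A) (f : ↥A → ℝ) :
    (L.map f).sum = ∑ i : Fin L.length, f (L.get i) := by
  rw [← List.ofFn_getElem_eq_map, List.sum_ofFn]; rfl

lemma map_mul_sum (L : List ↥A) (ρ : ↥A) (p : Fin n × Fin n) :
    ((L.map (· * ρ)).map fun σ : ↥A => permMat (σ : Equiv.Perm (Fin n)) p).sum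
      = (L.map fun σ : ↥A => permMat (σ : Equiv.Perm (Fin n))
          (p.1, (ρ : Equiv.Perm (Fin n)) p.2)).sum := by
  rw [List.map_map]
  refine congrArg List.sum (List.map_congr_left ?_)
  intro σ _
  simp [Function.comp, permMat_mul]

lemma list_decomp (hA : PermutationSummable A) (Lneg Lpos : List ↥A)
    (h : ∀ p, 0 ≤ (Lpos.map fun σ : ↥A => permMat (σ : Equiv.Perm (Fin n)) p).sum
          - (Lneg.map fun σ : ↥A => permMat (σ : Equiv.Perm (Fin n)) p).sum) :
    ∃ R : List ↥A, ∀ p,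
      (Lpos.map fun σ : ↥A => permMat (σ : Equiv.Perm (Fin n)) p).sum
        - (Lneg.map fun σ : ↥A => permMat (σ : Equiv.Perm (Fin n)) p).sum
      = (R.map fun σ : ↥A => permMat (σ : Equiv.Perm (Fin n)) p).sum := by
  classical
  obtain ⟨k, hk⟩ : ∃ k, Lneg.length = k := ⟨_, rfl⟩
  induction k generalizing Lneg Lpos with
  | zero =>
    rw [List.length_eq_zero_iff] at hk
    subst hk
    exact ⟨Lpos, fun p => by simp⟩
  | succ k ih =>
    obtain ⟨τ, L', rfl⟩ : ∃ τ L', Lneg = τ :: L' := by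
      cases Lneg with
      | nil => simp at hk
      | cons a l => exact ⟨a, l, rfl⟩
    simp only [List.length_cons, Nat.succ.injEq] at hk
    -- auxiliary facts
    have hτq : ∀ p : Fin n × Fin n,
        permMat (τ : Equiv.Perm (Fin n)) (p.1, ((τ : Equiv.Perm (Fin n)))⁻¹ p.2)
          = permMat 1 p := by
      intro p
      simp [permMat]
      congr 1
    -- apply permutation summability
    have h1 : ∀ p : Fin n × Fin n,
        0 ≤ (∑ i : Fin Lpos.length,
            permMat ((Lpos.get i * τ⁻¹ : ↥A) : Equiv.Perm (Fin n)) p) - permMat 1 p := by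
      intro p
      set q : Fin n × Fin n := (p.1, ((τ : Equiv.Perm (Fin n)))⁻¹ p.2) with hq
      have e1 : (∑ i : Fin Lpos.length,
          permMat ((Lpos.get i * τ⁻¹ : ↥A) : Equiv.Perm (Fin n)) p)
          = (Lpos.map fun σ : ↥A => permMat (σ : Equiv.Perm (Fin n)) q).sum := by
        rw [list_map_sum_eq]
        apply Finset.sum_congr rfl
        intro i _
        rw [hq]
        push_cast
        rw [permMat_mul]
      rw [e1, ← hτq p]
      have h2 := h q
      rw [List.map_cons, List.sum_cons] at h2
      have h3 : 0 ≤ (L'.map fun σ : ↥A => permMat (σ : Equiv.Perm (Fin n)) q).sum :=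
        List.sum_nonneg (by
          intro x hx
          obtain ⟨σ, _, rfl⟩ := List.mem_map.mp hx
          exact permMat_nonneg _ _)
      linarith
    obtain ⟨r, Qf, hQ⟩ := hA Lpos.length (fun i => Lpos.get i * τ⁻¹) h1
    set LQ : List ↥A := List.ofFn Qf with hLQ
    set Lneg₂ : List ↥A := L'.map (· * τ⁻¹) with hLneg₂
    have hlen₂ : Lneg₂.length = k := by simp [hLneg₂, hk]
    have hsum_LQ : ∀ p, (LQ.map fun σ : ↥A => permMat (σ : Equiv.Perm (Fin n)) p).sum
        = (Lpos.map fun σ : ↥A => permMat (σ : Equiv.Perm (Fin n))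
            (p.1, ((τ : Equiv.Perm (Fin n)))⁻¹ p.2)).sum - permMat 1 p := by
      intro p
      have e2 : (LQ.map fun σ : ↥A => permMat (σ : Equiv.Perm (Fin n)) p).sum
          = ∑ j, permMat ((Qf j : ↥A) : Equiv.Perm (Fin n)) p := by
        rw [hLQ, List.map_ofFn, List.sum_ofFn]
        rfl
      rw [e2, ← congrFun hQ p]
      congr 1
      rw [list_map_sum_eq]
      apply Finset.sum_congr rfl
      intro i _
      push_cast
      rw [permMat_mul]
    have hsum_neg₂ : ∀ p, (Lneg₂.map fun σ : ↥A => permMat (σ : Equiv.Perm (Fin n)) p).sum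
        = (L'.map fun σ : ↥A => permMat (σ : Equiv.Perm (Fin n))
            (p.1, ((τ : Equiv.Perm (Fin n)))⁻¹ p.2)).sum := by
      intro p
      rw [hLneg₂, map_mul_sum L' τ⁻¹ p]
      simp
    have h2 : ∀ p, 0 ≤ (LQ.map fun σ : ↥A => permMat (σ : Equiv.Perm (Fin n)) p).sum
          - (Lneg₂.map fun σ : ↥A => permMat (σ : Equiv.Perm (Fin n)) p).sum := by
      intro p
      rw [hsum_LQ, hsum_neg₂, ← hτq p]
      have h3 := h (p.1, ((τ : Equiv.Perm (Fin n)))⁻¹ p.2)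
      rw [List.map_cons, List.sum_cons] at h3
      linarith
    obtain ⟨R', hR'⟩ := ih Lneg₂ LQ h2 hlen₂
    refine ⟨R'.map (· * τ), fun p => ?_⟩
    have hp' := hR' (p.1, (τ : Equiv.Perm (Fin n)) p.2)
    rw [hsum_LQ, hsum_neg₂] at hp'
    simp only [Equiv.Perm.inv_def, Equiv.symm_apply_apply] at hp'
    have e3 : permMat 1 (p.1, (τ : Equiv.Perm (Fin n)) p.2)
        = permMat (τ : Equiv.Perm (Fin n)) p := by
      simp [permMat]
      congr 1
    rw [e3] at hp'
    have e4 := map_mul_sum R' τ p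
    rw [e4]
    rw [List.map_cons, List.sum_cons]
    rw [← hp']
    ring


open scoped RealInnerProductSpace

noncomputable section

variable {n : ℕ} {A : Subgroup (Equiv.Perm (Fin n))} [Fintype ↥A]

abbrev EE (n : ℕ) := EuclideanSpace ℝ (Option (Fin n × Fin n))

def vfun (A : Subgroup (Equiv.Perm (Fin n))) (σ : ↥A) : EE n :=
  WithLp.toLp 2 (fun i => Option.elim i 1 (fun p => permMat (σ : Equiv.Perm (Fin n)) p))

@[simp] lemma vfun_none (σ : ↥A) : vfun A σ none = 1 := rfl

@[simp] lemma vfun_some (σ : ↥A) (p : Fin n × Fin n) :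
    vfun A σ (some p) = permMat (σ : Equiv.Perm (Fin n)) p := rfl

lemma vfun_nonneg (σ : ↥A) (i : Option (Fin n × Fin n)) : 0 ≤ vfun A σ i := by
  cases i with
  | none => norm_num
  | some p => exact permMat_nonneg _ _

lemma EE.sum_apply {m : ℕ} {κ : Type*} [Fintype κ] (f : κ → EE m)
    (j : Option (Fin m × Fin m)) :
    (∑ i, f i) j = ∑ i, f i j :=
  map_sum (⟨⟨fun x : EE m => x j, rfl⟩, fun _ _ => rfl⟩ : EE m →+ ℝ) f Finset.univ

lemma flatMap_replicate_map_sum (c : ↥A → ℕ) (f : ↥A → ℝ) :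
    ((Finset.univ.toList.flatMap fun σ : ↥A => List.replicate (c σ) σ).map f).sum
      = ∑ σ : ↥A, (c σ : ℝ) * f σ := by
  classical
  rw [List.map_flatMap]
  rw [List.flatMap_def, List.sum_flatten, List.map_map]
  rw [← Finset.sum_map_toList]
  congr 1
  apply List.map_congr_left
  intro σ _
  simp [List.map_replicate, List.sum_replicate, nsmul_eq_mul, Function.comp]

/-- The main geometric step: a nonnegative vector in the span of the `vfun σ` is a
nonnegative combination of them. -/
lemma mem_coneQ (hA : PermutationSummable A) (z : EE n)
    (hz : ∀ i, 0 ≤ z i) (α : ↥A → ℝ) (hzα : z = ∑ σ : ↥A, α σ • vfun A σ) :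
    ∃ s : ↥A → ℝ, (∀ σ, 0 ≤ s σ) ∧ z = ∑ σ : ↥A, s σ • vfun A σ := by
  classical
  rcases Nat.eq_zero_or_pos n with hn | hn
  · -- degenerate case n = 0
    subst hn
    have hss : ∀ σ τ : ↥A, σ = τ := by
      intro σ τ
      apply Subtype.ext
      exact Equiv.ext fun x => x.elim0
    have huniv : (Finset.univ : Finset ↥A) = {1} :=
      Finset.eq_singleton_iff_unique_mem.mpr ⟨Finset.mem_univ _, fun x _ => hss x 1⟩
    have hz1 : z = α 1 • vfun A 1 := by rw [hzα, huniv, Finset.sum_singleton]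
    have hα1 : 0 ≤ α 1 := by
      have := hz none
      rw [hz1] at this
      simpa [PiLp.smul_apply] using this
    refine ⟨α, fun σ => (hss σ 1) ▸ hα1, hzα⟩
  · -- main case
    set Qset : Set (EE n) :=
      {x | ∃ s : ↥A → ℝ, (∀ σ, 0 ≤ s σ) ∧ x = ∑ σ : ↥A, s σ • vfun A σ} with hQset
    have hclosed : IsClosed Qset := by
      apply isClosed_finite_cone (vfun A) (EuclideanSpace.single none 1)
      intro σ
      rw [EuclideanSpace.inner_single_right]
      simp
    suffices hcl : z ∈ closure Qset by exact hclosed.closure_subset hcl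
    rw [Metric.mem_closure_iff]
    intro ε hε
    set N : ℝ := ∑ σ : ↥A, ‖vfun A σ‖ with hN
    have hN0 : 0 ≤ N := Finset.sum_nonneg fun σ _ => norm_nonneg _
    obtain ⟨K, hK⟩ := exists_nat_gt (max 1 (2 * N / ε))
    have hK1 : (1 : ℝ) ≤ K := le_of_lt (lt_of_le_of_lt (le_max_left _ _) hK)
    have hK0 : (0 : ℝ) < K := lt_of_lt_of_le one_pos hK1
    set b : ↥A → ℤ := fun σ => round ((K : ℝ) * α σ + 1) with hb
    have herr : ∀ σ, |(b σ : ℝ) - ((K : ℝ) * α σ + 1)| ≤ 1 / 2 := by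
      intro σ
      rw [hb, abs_sub_comm]
      exact abs_sub_round _
    -- coordinatewise positivity of ∑ b σ • vfun σ
    have hcoord : ∀ i, 0 ≤ ∑ σ : ↥A, (b σ : ℝ) * vfun A σ i := by
      intro i
      have hzi : z i = ∑ σ : ↥A, α σ * vfun A σ i := by
        rw [hzα, EE.sum_apply]
        apply Finset.sum_congr rfl
        intro σ _
        simp [PiLp.smul_apply]
      have step : ∀ σ : ↥A, ((K : ℝ) * α σ + 1 / 2) * vfun A σ i ≤ (b σ : ℝ) * vfun A σ i := by
        intro σ
        apply mul_le_mul_of_nonneg_right _ (vfun_nonneg σ i)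
        have := abs_le.mp (herr σ)
        linarith [this.1]
      calc (0:ℝ) ≤ (K : ℝ) * z i + (1 / 2) * ∑ σ : ↥A, vfun A σ i := by
              apply add_nonneg
              · exact mul_nonneg hK0.le (hz i)
              · apply mul_nonneg (by norm_num)
                exact Finset.sum_nonneg fun σ _ => vfun_nonneg σ i
        _ = ∑ σ : ↥A, ((K : ℝ) * α σ + 1 / 2) * vfun A σ i := by
              rw [hzi, Finset.mul_sum, Finset.mul_sum, ← Finset.sum_add_distrib]
              apply Finset.sum_congr rfl
              intro σ _
              ring
        _ ≤ ∑ σ : ↥A, (b σ : ℝ) * vfun A σ i := Finset.sum_le_sum fun σ _ => step σ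
    -- decompose ∑ b σ • permMat σ as a sum of permutation matrices, using list_decomp
    set Lpos : List ↥A := Finset.univ.toList.flatMap fun σ : ↥A => List.replicate (b σ).toNat σ
      with hLpos
    set Lneg : List ↥A := Finset.univ.toList.flatMap fun σ : ↥A => List.replicate (-(b σ)).toNat σ
      with hLneg
    have hLsum : ∀ p : Fin n × Fin n,
        (Lpos.map fun σ : ↥A => permMat (σ : Equiv.Perm (Fin n)) p).sum
          - (Lneg.map fun σ : ↥A => permMat (σ : Equiv.Perm (Fin n)) p).sum
        = ∑ σ : ↥A, (b σ : ℝ) * permMat (σ : Equiv.Perm (Fin n)) p := by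
      intro p
      rw [hLpos, hLneg, flatMap_replicate_map_sum, flatMap_replicate_map_sum,
        ← Finset.sum_sub_distrib]
      apply Finset.sum_congr rfl
      intro σ _
      have : ((b σ).toNat : ℝ) - (((-(b σ)).toNat : ℕ) : ℝ) = (b σ : ℝ) := by
        have := Int.toNat_sub_toNat_neg (b σ)
        have h2 : (((b σ).toNat : ℤ) : ℝ) - ((((-(b σ)).toNat : ℤ)) : ℝ) = ((b σ : ℤ) : ℝ) := by
          rw [← Int.cast_sub]
          exact_mod_cast congrArg (fun x : ℤ => (x : ℝ)) this
        push_cast at h2 ⊢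
        linarith
      rw [← sub_mul, this]
    obtain ⟨R, hR⟩ := list_decomp hA Lneg Lpos (by
      intro p
      rw [hLsum p]
      exact hcoord (some p))
    have hRsum : ∀ p : Fin n × Fin n,
        ∑ σ : ↥A, (b σ : ℝ) * permMat (σ : Equiv.Perm (Fin n)) p
          = (R.map fun σ : ↥A => permMat (σ : Equiv.Perm (Fin n)) p).sum := by
      intro p
      rw [← hLsum p]
      exact hR p
    -- row sums give the cardinality identity
    have hcount : ∑ σ : ↥A, (b σ : ℝ) = R.length := by
      have j0 : Fin n := ⟨0, hn⟩
      have h1 : ∑ i : Fin n, ∑ σ : ↥A, (b σ : ℝ) * permMat (σ : Equiv.Perm (Fin n)) (i, j0)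
          = ∑ σ : ↥A, (b σ : ℝ) := by
        rw [Finset.sum_comm]
        apply Finset.sum_congr rfl
        intro σ _
        rw [← Finset.mul_sum, permMat_row_sum, mul_one]
      have h2 : ∑ i : Fin n,
          (R.map fun σ : ↥A => permMat (σ : Equiv.Perm (Fin n)) (i, j0)).sum
          = (R.length : ℝ) := by
        calc ∑ i : Fin n, (R.map fun σ : ↥A => permMat (σ : Equiv.Perm (Fin n)) (i, j0)).sum
            = ∑ i : Fin n, ∑ l : Fin R.length,
                permMat ((R.get l : ↥A) : Equiv.Perm (Fin n)) (i, j0) :=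
              Finset.sum_congr rfl fun i _ => list_map_sum_eq R _
          _ = ∑ l : Fin R.length, ∑ i : Fin n,
                permMat ((R.get l : ↥A) : Equiv.Perm (Fin n)) (i, j0) := Finset.sum_comm
          _ = ∑ _l : Fin R.length, (1:ℝ) :=
              Finset.sum_congr rfl fun l _ => permMat_row_sum _ _
          _ = (R.length : ℝ) := by simp
      rw [← h1, ← h2]
      exact Finset.sum_congr rfl fun i _ => hRsum (i, j0)
    -- counting function
    have hcnt : ∀ f : ↥A → ℝ,
        (R.map f).sum = ∑ σ : ↥A, (R.count σ : ℝ) * f σ := by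
      intro f
      rw [Finset.sum_list_map_count]
      rw [Finset.sum_subset (Finset.subset_univ R.toFinset) (by
        intro σ _ hσ
        simp only [List.mem_toFinset] at hσ
        have h0 : R.count σ = 0 := List.count_eq_zero_of_not_mem hσ
        simp [hσ]
        left
        convert h0)]
      apply Finset.sum_congr rfl
      intro σ _
      rw [nsmul_eq_mul]
      congr!
    have hlen : ∑ σ : ↥A, (R.count σ : ℝ) = (R.length : ℝ) := by
      have := hcnt (fun _ => (1:ℝ))
      rw [List.map_const'] at this
      rw [List.sum_replicate] at this
      simp only [nsmul_eq_mul, mul_one] at this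
      rw [← this]
    -- the two coefficient families give the same vector
    have hbc : ∀ i, ∑ σ : ↥A, (R.count σ : ℝ) * vfun A σ i
        = ∑ σ : ↥A, (b σ : ℝ) * vfun A σ i := by
      intro i
      cases i with
      | none =>
        simp only [vfun_none, mul_one]
        rw [hlen, hcount]
      | some p =>
        simp only [vfun_some]
        rw [← hcnt, ← hRsum]
    set s : ↥A → ℝ := fun σ => (R.count σ : ℝ) / K with hs
    set q : EE n := ∑ σ : ↥A, s σ • vfun A σ with hq
    have hqmem : q ∈ Qset := ⟨s, fun σ => div_nonneg (Nat.cast_nonneg _) hK0.le, rfl⟩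
    have hqb : q = ∑ σ : ↥A, ((b σ : ℝ) / K) • vfun A σ := by
      rw [hq]
      apply PiLp.ext
      intro i
      rw [EE.sum_apply, EE.sum_apply]
      simp only [PiLp.smul_apply, smul_eq_mul]
      rw [show ∀ g : ↥A → ℝ, ∑ σ : ↥A, g σ / (K:ℝ) * vfun A σ i
            = (∑ σ : ↥A, g σ * vfun A σ i) / K from fun g => by
          rw [Finset.sum_div]
          exact Finset.sum_congr rfl fun σ _ => by ring,
        show ∀ g : ↥A → ℝ, ∑ σ : ↥A, g σ / (K:ℝ) * vfun A σ i
            = (∑ σ : ↥A, g σ * vfun A σ i) / K from fun g => by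
          rw [Finset.sum_div]
          exact Finset.sum_congr rfl fun σ _ => by ring]
      rw [hbc i]
    refine ⟨q, hqmem, ?_⟩
    -- distance estimate
    have hzq : z - q = ∑ σ : ↥A, (α σ - (b σ : ℝ)/K) • vfun A σ := by
      rw [hzα, hqb, ← Finset.sum_sub_distrib]
      exact Finset.sum_congr rfl fun σ _ => (sub_smul _ _ _).symm
    have hcoef : ∀ σ : ↥A, |α σ - (b σ : ℝ)/K| ≤ 2 / K := by
      intro σ
      have h1 : |(b σ : ℝ) - (K:ℝ) * α σ| ≤ 3/2 := by
        have := herr σ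
        have h2 : |(b σ : ℝ) - (K:ℝ) * α σ| ≤ |(b σ : ℝ) - ((K:ℝ) * α σ + 1)| + 1 := by
          have : (b σ : ℝ) - (K:ℝ) * α σ = ((b σ : ℝ) - ((K:ℝ) * α σ + 1)) + 1 := by ring
          rw [this]
          calc |((b σ : ℝ) - ((K:ℝ) * α σ + 1)) + 1|
              ≤ |(b σ : ℝ) - ((K:ℝ) * α σ + 1)| + |(1:ℝ)| := abs_add_le _ _
            _ = |(b σ : ℝ) - ((K:ℝ) * α σ + 1)| + 1 := by rw [abs_one]
        linarith
      have h3 : α σ - (b σ : ℝ)/K = -(((b σ : ℝ) - (K:ℝ) * α σ)/K) := by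
        field_simp
        ring
      rw [h3, abs_neg, abs_div, abs_of_pos hK0]
      rw [div_le_div_iff₀ hK0 hK0]
      nlinarith
    have hnorm : ‖z - q‖ ≤ 2 / K * N := by
      rw [hzq]
      calc ‖∑ σ : ↥A, (α σ - (b σ : ℝ)/K) • vfun A σ‖
          ≤ ∑ σ : ↥A, ‖(α σ - (b σ : ℝ)/K) • vfun A σ‖ := norm_sum_le _ _
        _ = ∑ σ : ↥A, |α σ - (b σ : ℝ)/K| * ‖vfun A σ‖ := by
            apply Finset.sum_congr rfl
            intro σ _
            rw [norm_smul, Real.norm_eq_abs]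
        _ ≤ ∑ σ : ↥A, 2 / K * ‖vfun A σ‖ :=
            Finset.sum_le_sum fun σ _ =>
              mul_le_mul_of_nonneg_right (hcoef σ) (norm_nonneg _)
        _ = 2 / K * N := by rw [hN, Finset.mul_sum]
    have hfinal : 2 / K * N < ε := by
      have h2N : 2 * N / ε < K := lt_of_le_of_lt (le_max_right _ _) hK
      rw [div_mul_eq_mul_div, mul_comm]
      rw [div_lt_iff₀ hK0]
      rw [div_lt_iff₀ hε] at h2N
      calc N * 2 = 2 * N := by ring
        _ < K * ε := h2N
        _ = ε * K := by ring
    rw [dist_eq_norm]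
    exact lt_of_le_of_lt hnorm hfinal

end


open MvPolynomial
open scoped RealInnerProductSpace


noncomputable section

variable {n : ℕ} {A : Subgroup (Equiv.Perm (Fin n))} [Fintype ↥A]

lemma EE.inner_eq (x y : EE n) : ⟪x, y⟫ = ∑ i, x i * y i := by
  rw [PiLp.inner_apply]
  apply Finset.sum_congr rfl
  intro i _
  simp [RCLike.inner_apply, conj_trivial]
  ring

/-- Key lemma: every affine polynomial nonnegative on the permutation matrices of `A`
is 1-sos modulo the vanishing ideal. -/
lemma key_sos (hA : PermutationSummable A) (l : MvPolynomial (Fin n × Fin n) ℝ)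
    (hdeg : l.totalDegree ≤ 1)
    (hpos : ∀ σ : ↥A, 0 ≤ eval (permMat (σ : Equiv.Perm (Fin n))) l) :
    IsKSos ((vanishingIdeal ℝ {x : Fin n × Fin n → ℝ | ∃ σ ∈ A, x = permMat σ} :
      Ideal (MvPolynomial (Fin n × Fin n) ℝ)) : Set (MvPolynomial (Fin n × Fin n) ℝ)) 1 l := by
  classical
  -- the linear functional recording the coefficients of `l`
  set F : EE n := WithLp.toLp 2 (fun i => Option.elim i (MvPolynomial.coeff 0 l)
      (fun p => MvPolynomial.coeff (Finsupp.single p 1) l)) with hF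
  have hFv : ∀ σ : ↥A, ⟪F, vfun A σ⟫ = eval (permMat (σ : Equiv.Perm (Fin n))) l := by
    intro σ
    rw [EE.inner_eq, Fintype.sum_option, eval_deg_le_one l hdeg]
    simp only [hF, vfun_none, vfun_some, Option.elim, mul_one]
  set W : Submodule ℝ (EE n) := Submodule.span ℝ (Set.range (vfun A)) with hW
  haveI : Nonempty ↥A := ⟨1⟩
  set w : EE n := ∑ σ : ↥A, vfun A σ with hw
  have hwW : w ∈ W := Submodule.sum_mem _ fun σ _ => Submodule.subset_span ⟨σ, rfl⟩
  have hw_nonneg : ∀ i, 0 ≤ w i := by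
    intro i
    rw [hw, EE.sum_apply]
    exact Finset.sum_nonneg fun σ _ => vfun_nonneg σ i
  have hwnone : 0 < w none := by
    rw [hw, EE.sum_apply]
    simp only [vfun_none, Finset.sum_const, nsmul_eq_mul, mul_one, Finset.card_univ]
    exact_mod_cast Fintype.card_pos
  set jm : Option (Fin n × Fin n) → Option (Fin n × Fin n) :=
    fun i => if 0 < w i then i else none with hjm
  have hwjm : ∀ i, 0 < w (jm i) := by
    intro i
    by_cases hwi : 0 < w i
    · rw [hjm]
      dsimp only
      rw [if_pos hwi]
      exact hwi
    · rw [hjm]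
      dsimp only
      rw [if_neg hwi]
      exact hwnone
  set gvec : Option (Fin n × Fin n) → EE n :=
    fun i => W.starProjection (EuclideanSpace.single (jm i) (1:ℝ)) with hgvec
  have hproj_inner : ∀ u : EE n, ⟪W.starProjection u, w⟫ = ⟪u, w⟫ := by
    intro u
    rw [Submodule.inner_starProjection_left_eq_right, Submodule.starProjection_eq_self_iff.mpr hwW]
  have hg_w : ∀ i, ⟪gvec i, w⟫ = w (jm i) := by
    intro i
    rw [hgvec]
    dsimp only
    rw [hproj_inner, EuclideanSpace.inner_single_left]
    simp
  -- the cone generated by the projections of the coordinate vectors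
  set Pset : Set (EE n) :=
    {x | ∃ t : Option (Fin n × Fin n) → ℝ, (∀ i, 0 ≤ t i) ∧ x = ∑ i, t i • gvec i} with hPset
  have hPclosed : IsClosed Pset :=
    isClosed_finite_cone gvec w (fun i => by rw [hg_w]; exact hwjm i)
  set Pcone : ConvexCone ℝ (EE n) :=
    { carrier := Pset
      smul_mem' := by
        rintro c hc x ⟨t, ht0, rfl⟩
        refine ⟨fun i => c * t i, fun i => mul_nonneg hc.le (ht0 i), ?_⟩
        rw [Finset.smul_sum]
        exact Finset.sum_congr rfl fun i _ => (smul_smul c (t i) (gvec i))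
      add_mem' := by
        rintro x ⟨t, ht0, rfl⟩ y ⟨t', ht0', rfl⟩
        refine ⟨fun i => t i + t' i, fun i => add_nonneg (ht0 i) (ht0' i), ?_⟩
        rw [← Finset.sum_add_distrib]
        exact Finset.sum_congr rfl fun i _ => (add_smul (t i) (t' i) (gvec i)).symm } with hPcone
  have hP0 : (0 : EE n) ∈ Pset := ⟨fun _ => 0, fun _ => le_refl _, by simp⟩
  -- the projection of F lies in this cone
  have hu : W.starProjection F ∈ Pset := by
    by_contra hu
    obtain ⟨y, hy1, hy2⟩ : ∃ y : EE n, (∀ x ∈ Pset, 0 ≤ ⟪x, y⟫) ∧ ⟪y, W.starProjection F⟫ < 0 := by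
      obtain ⟨C, hC⟩ := CanLift.prf (β := ProperCone ℝ (EE n)) Pcone ⟨⟨0, hP0⟩, hPclosed⟩
      have hCmem : ∀ x, x ∈ C ↔ x ∈ Pset := fun x => by
        change x ∈ (C : ConvexCone ℝ (EE n)) ↔ _
        rw [hC]
        rfl
      obtain ⟨y, hy1, hy2⟩ := C.hyperplane_separation' (x₀ := W.starProjection F)
        (fun h => hu ((hCmem _).mp h))
      exact ⟨y, fun x hx => hy1 x ((hCmem x).mpr hx), by rw [real_inner_comm]; exact hy2⟩
    set z : EE n := W.starProjection y with hz
    have hzW : z ∈ W := W.starProjection_apply_mem y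
    obtain ⟨β, hβ⟩ := (Submodule.mem_span_range_iff_exists_fun ℝ).mp hzW
    have hzcoord : ∀ i, z i = ⟪EuclideanSpace.single i (1:ℝ), z⟫ := by
      intro i
      rw [EuclideanSpace.inner_single_left]
      simp
    have hznn : ∀ i, 0 ≤ z i := by
      intro i
      by_cases hwi : 0 < w i
      · have hgP : gvec i ∈ Pset := by
          refine ⟨fun j => if j = i then 1 else 0, fun j => by positivity, ?_⟩
          have h5 : ∑ j, (if j = i then (1:ℝ) else 0) • gvec j = gvec i := by
            rw [Finset.sum_congr rfl (fun j _ =>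
              show (if j = i then (1:ℝ) else 0) • gvec j = if j = i then gvec j else 0 by
                split <;> simp)]
            rw [Finset.sum_ite_eq' Finset.univ i gvec]
            simp
          exact h5.symm
        have h0 := hy1 _ hgP
        rw [hgvec] at h0
        dsimp only at h0
        rw [Submodule.inner_starProjection_left_eq_right] at h0
        rw [EuclideanSpace.inner_single_left] at h0
        simp only [map_one, one_mul] at h0
        rw [hjm] at h0
        dsimp only at h0
        rw [if_pos hwi] at h0
        exact h0
      · have hwi0 : w i = 0 := le_antisymm (not_lt.mp hwi) (hw_nonneg i)
        have hv0 : ∀ σ : ↥A, vfun A σ i = 0 := by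
          have hsum0 : ∑ σ : ↥A, vfun A σ i = 0 := by
            rw [← EE.sum_apply, ← hw, hwi0]
          intro σ
          exact (Finset.sum_eq_zero_iff_of_nonneg
            (fun τ _ => vfun_nonneg τ i)).mp hsum0 σ (Finset.mem_univ σ)
        have : z i = 0 := by
          rw [← hβ, EE.sum_apply]
          apply Finset.sum_eq_zero
          intro σ _
          rw [PiLp.smul_apply, hv0 σ]
          simp
        rw [this]
    obtain ⟨s, hs0, hzs⟩ := mem_coneQ hA z hznn β hβ.symm
    have hFz : 0 ≤ ⟪F, z⟫ := by
      rw [hzs, inner_sum]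
      apply Finset.sum_nonneg
      intro σ _
      rw [real_inner_smul_right]
      exact mul_nonneg (hs0 σ) (by rw [hFv σ]; exact hpos σ)
    have heq : ⟪F, z⟫ = ⟪W.starProjection F, y⟫ := by
      rw [hz, ← Submodule.inner_starProjection_left_eq_right]
    rw [heq] at hFz
    rw [real_inner_comm] at hFz
    linarith
  obtain ⟨t, ht0, htu⟩ := hu
  -- assemble the nonnegative coefficient vector
  set lam : EE n := ∑ i, t i • (EuclideanSpace.single (jm i) (1:ℝ)) with hlam
  have hlam0 : ∀ j, 0 ≤ lam j := by
    intro j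
    rw [hlam, EE.sum_apply]
    apply Finset.sum_nonneg
    intro i _
    rw [PiLp.smul_apply, EuclideanSpace.single_apply]
    simp only [smul_eq_mul]
    split
    · simpa using ht0 i
    · simp
  have hlamproj : W.starProjection lam = W.starProjection F := by
    have hmap : W.starProjection lam = ∑ i, t i • gvec i := by
      rw [hlam, map_sum]
      apply Finset.sum_congr rfl
      intro i _
      rw [map_smul]
    rw [hmap, ← htu]
  have horth : ∀ σ : ↥A, ⟪lam, vfun A σ⟫ = ⟪F, vfun A σ⟫ := by
    intro σ
    have hsub : lam - F ∈ Wᗮ := by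
      have h1 := Submodule.sub_starProjection_mem_orthogonal (K := W) (lam - F)
      have h2 : W.starProjection (lam - F) = 0 := by
        rw [map_sub]
        push_cast
        rw [hlamproj, sub_self]
      rw [h2, sub_zero] at h1
      exact h1
    have hv : vfun A σ ∈ W := Submodule.subset_span ⟨σ, rfl⟩
    have h3 := (Submodule.mem_orthogonal W (lam - F)).mp hsub (vfun A σ) hv
    rw [inner_sub_right] at h3
    have h4 : ⟪vfun A σ, lam⟫ = ⟪vfun A σ, F⟫ := by linarith
    calc ⟪lam, vfun A σ⟫ = ⟪vfun A σ, lam⟫ := real_inner_comm _ _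
      _ = ⟪vfun A σ, F⟫ := h4
      _ = ⟪F, vfun A σ⟫ := real_inner_comm _ _
  -- build the sum of squares
  set G : Option (Fin n × Fin n) → MvPolynomial (Fin n × Fin n) ℝ :=
    fun i => Option.elim i (MvPolynomial.C (Real.sqrt (lam none)))
      (fun p => MvPolynomial.C (Real.sqrt (lam (some p))) * MvPolynomial.X p) with hG
  have hGdeg : ∀ i, (G i).totalDegree ≤ 1 := by
    intro i
    cases i with
    | none => simp [hG, totalDegree_C]
    | some p =>
      rw [hG]
      dsimp only [Option.elim]
      calc (MvPolynomial.C (Real.sqrt (lam (some p))) * MvPolynomial.X p).totalDegree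
          ≤ (MvPolynomial.C (Real.sqrt (lam (some p))) : MvPolynomial (Fin n × Fin n) ℝ).totalDegree
            + (MvPolynomial.X p : MvPolynomial (Fin n × Fin n) ℝ).totalDegree :=
            totalDegree_mul _ _
        _ ≤ 1 := by rw [totalDegree_C, totalDegree_X]
  refine ⟨Fintype.card (Option (Fin n × Fin n)),
    fun j => G ((Fintype.equivFin (Option (Fin n × Fin n))).symm j),
    fun j => hGdeg _, ?_⟩
  have hsumG : ∑ j, (G ((Fintype.equivFin (Option (Fin n × Fin n))).symm j)) ^ 2
      = ∑ i, (G i) ^ 2 :=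
    Equiv.sum_comp (Fintype.equivFin (Option (Fin n × Fin n))).symm (fun i => (G i) ^ 2)
  rw [hsumG, SetLike.mem_coe, mem_vanishingIdeal_iff]
  intro x hx
  obtain ⟨σp, hσpA, rfl⟩ := hx
  set σ : ↥A := ⟨σp, hσpA⟩ with hσ
  rw [map_sub, map_sum, MvPolynomial.aeval_eq_eval]
  have hGe : ∀ i, (eval (permMat σp)) (G i ^ 2) = lam i * vfun A σ i := by
    intro i
    cases i with
    | none =>
      rw [hG]
      dsimp only [Option.elim]
      rw [map_pow, eval_C, Real.sq_sqrt (hlam0 none), vfun_none, mul_one]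
    | some p =>
      rw [hG]
      dsimp only [Option.elim]
      rw [map_pow, map_mul, eval_C, eval_X, mul_pow, Real.sq_sqrt (hlam0 (some p))]
      rw [vfun_some]
      have : permMat σp p ^ 2 = permMat σp p := permMat_sq σp p
      rw [this]
  rw [Finset.sum_congr rfl fun i _ => hGe i]
  have h1 : ∑ i, lam i * vfun A σ i = ⟪lam, vfun A σ⟫ := (EE.inner_eq _ _).symm
  rw [h1, horth σ, hFv σ]
  exact sub_self _

end


open MvPolynomial



noncomputable section

variable {n : ℕ} (A : Subgroup (Equiv.Perm (Fin n)))

lemma S_eq_range : {x : Fin n × Fin n → ℝ | ∃ σ ∈ A, x = permMat σ}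
    = Set.range (fun σ : ↥A => permMat (σ : Equiv.Perm (Fin n))) := by
  ext x
  constructor
  · rintro ⟨σ, hσ, rfl⟩
    exact ⟨⟨σ, hσ⟩, rfl⟩
  · rintro ⟨σ, rfl⟩
    exact ⟨↑σ, σ.2, rfl⟩

lemma S_finite : {x : Fin n × Fin n → ℝ | ∃ σ ∈ A, x = permMat σ}.Finite := by
  rw [S_eq_range]
  exact Set.finite_range _

lemma realVariety_vI_eq :
    realVariety ((vanishingIdeal ℝ {x : Fin n × Fin n → ℝ | ∃ σ ∈ A, x = permMat σ} :
        Ideal (MvPolynomial (Fin n × Fin n) ℝ)) : Set (MvPolynomial (Fin n × Fin n) ℝ))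
      = {x : Fin n × Fin n → ℝ | ∃ σ ∈ A, x = permMat σ} := by
  classical
  set S : Set (Fin n × Fin n → ℝ) := {x | ∃ σ ∈ A, x = permMat σ} with hS
  have hfin : S.Finite := S_finite A
  apply Set.Subset.antisymm
  · intro x hx
    by_contra hxS
    have hwit : ∀ s ∈ hfin.toFinset, ∃ p, x p ≠ s p := by
      intro s hs
      have hxs : x ≠ s := fun h => hxS (h ▸ hfin.mem_toFinset.mp hs)
      exact Function.ne_iff.mp hxs
    choose wit hwit' using hwit
    set f : MvPolynomial (Fin n × Fin n) ℝ :=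
      ∏ s ∈ hfin.toFinset.attach, (X (wit s.1 s.2) - C (s.1 (wit s.1 s.2))) with hf
    have hfI : f ∈ (vanishingIdeal ℝ S : Ideal (MvPolynomial (Fin n × Fin n) ℝ)) := by
      rw [mem_vanishingIdeal_iff]
      intro y hy
      rw [hf, map_prod]
      apply Finset.prod_eq_zero
        (Finset.mem_attach hfin.toFinset ⟨y, hfin.mem_toFinset.mpr hy⟩)
      simp
    have h0 := hx f hfI
    rw [hf, map_prod] at h0
    have hne : ∏ s ∈ hfin.toFinset.attach,
        (eval x) (X (wit s.1 s.2) - C (s.1 (wit s.1 s.2))) ≠ 0 := by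
      apply Finset.prod_ne_zero_iff.mpr
      intro s _
      rw [map_sub, eval_X, eval_C]
      exact sub_ne_zero_of_ne (hwit' s.1 s.2)
    exact hne h0
  · intro x hx f hf
    exact hf x hx

/-- The main theorem. -/
theorem permutation_summable_thOneExact' (hA : PermutationSummable A) :
    thetaBody ((vanishingIdeal ℝ {x : Fin n × Fin n → ℝ | ∃ σ ∈ A, x = permMat σ} :
        Ideal (MvPolynomial (Fin n × Fin n) ℝ)) : Set (MvPolynomial (Fin n × Fin n) ℝ)) 1 =
      closure (convexHull ℝ (realVariety
        ((vanishingIdeal ℝ {x : Fin n × Fin n → ℝ | ∃ σ ∈ A, x = permMat σ} :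
          Ideal (MvPolynomial (Fin n × Fin n) ℝ)) : Set (MvPolynomial (Fin n × Fin n) ℝ)))) := by
  classical
  rw [realVariety_vI_eq A]
  set S : Set (Fin n × Fin n → ℝ) := {x | ∃ σ ∈ A, x = permMat σ} with hS
  have hfin : S.Finite := S_finite A
  have hcompact : IsCompact (convexHull ℝ S) := hfin.isCompact_convexHull ℝ
  rw [hcompact.isClosed.closure_eq]
  apply Set.Subset.antisymm
  · -- hard direction: thetaBody ⊆ conv S
    intro x hx
    by_contra hxS
    obtain ⟨f, u, hfx, hsep⟩ :=
      geometric_hahn_banach_point_closed (convex_convexHull ℝ S) hcompact.isClosed hxS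
    -- the affine polynomial representing f - u
    set l : MvPolynomial (Fin n × Fin n) ℝ :=
      (∑ p : Fin n × Fin n, C (f (Pi.single p 1)) * X p) + C (-u) with hl
    have hleval : ∀ y : Fin n × Fin n → ℝ, eval y l = f y - u := by
      intro y
      rw [hl, map_add, map_sum, eval_C]
      have h1 : ∀ p : Fin n × Fin n, (eval y) (C (f (Pi.single p 1)) * X p)
          = f (Pi.single p 1) * y p := by
        intro p
        rw [map_mul, eval_C, eval_X]
      rw [Finset.sum_congr rfl fun p _ => h1 p]
      have h2 : f y = ∑ p : Fin n × Fin n, f (Pi.single p 1) * y p := by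
        have hy : y = ∑ p : Fin n × Fin n,
            y p • (Pi.single p (1:ℝ) : (Fin n × Fin n) → ℝ) := by
          apply _root_.funext
          intro q
          rw [show ((∑ p : Fin n × Fin n,
                y p • (Pi.single p (1:ℝ) : (Fin n × Fin n) → ℝ)) q)
              = ∑ p : Fin n × Fin n,
                y p • ((Pi.single p (1:ℝ) : (Fin n × Fin n) → ℝ) q) from
            map_sum (⟨⟨fun v : (Fin n × Fin n) → ℝ => v q, rfl⟩, fun _ _ => rfl⟩ :
              ((Fin n × Fin n) → ℝ) →+ ℝ) _ Finset.univ]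
          simp [Pi.single_apply]
        conv_lhs => rw [hy]
        rw [map_sum]
        apply Finset.sum_congr rfl
        intro p _
        rw [map_smul]
        simp [smul_eq_mul, mul_comm]
      rw [← h2]
      ring
    have hldeg : l.totalDegree ≤ 1 := by
      rw [hl]
      apply le_trans (totalDegree_add _ _)
      apply max_le
      · apply le_trans (totalDegree_finset_sum _ _)
        apply Finset.sup_le
        intro p _
        apply le_trans (totalDegree_mul _ _)
        rw [totalDegree_C, totalDegree_X]
      · rw [totalDegree_C]
        norm_num
    have hlpos : ∀ σ : ↥A, 0 ≤ eval (permMat (σ : Equiv.Perm (Fin n))) l := by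
      intro σ
      rw [hleval]
      have hmem : permMat (σ : Equiv.Perm (Fin n)) ∈ convexHull ℝ S :=
        subset_convexHull ℝ S ⟨↑σ, σ.2, rfl⟩
      linarith [hsep _ hmem]
    have hsos := key_sos hA l hldeg hlpos
    have := hx l hldeg hsos
    rw [hleval x] at this
    linarith
  · -- easy direction: conv S ⊆ thetaBody
    intro x hx l hldeg hsos
    obtain ⟨r, g, hgdeg, hmem⟩ := hsos
    have hSsub : S ⊆ {y | 0 ≤ eval y l} := by
      intro y hy
      have h0 : eval y (l - ∑ i, g i ^ 2) = 0 := hmem y hy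
      rw [map_sub, map_sum, sub_eq_zero] at h0
      rw [Set.mem_setOf_eq, h0]
      apply Finset.sum_nonneg
      intro i _
      rw [map_pow]
      positivity
    have hconv : Convex ℝ {y : Fin n × Fin n → ℝ | 0 ≤ eval y l} := by
      intro a ha b hb s t hs ht hst
      rw [Set.mem_setOf_eq, eval_affine l hldeg a b s t hst]
      exact add_nonneg (mul_nonneg hs ha) (mul_nonneg ht hb)
    exact convexHull_min hSsub hconv hx

end

/-- If `A ⊆ S_n` is permutation summable, then the vanishing ideal `I_A` of
the set of permutation matrices of `A` is `TH₁`-exact. -/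
theorem permutation_summable_thOneExact {n : ℕ} (A : Subgroup (Equiv.Perm (Fin n)))
    (hA : PermutationSummable A) :
    thetaBody ((vanishingIdeal ℝ {x : Fin n × Fin n → ℝ | ∃ σ ∈ A, x = permMat σ} :
        Ideal (MvPolynomial (Fin n × Fin n) ℝ)) : Set (MvPolynomial (Fin n × Fin n) ℝ)) 1 =
      closure (convexHull ℝ (realVariety
        ((vanishingIdeal ℝ {x : Fin n × Fin n → ℝ | ∃ σ ∈ A, x = permMat σ} :
          Ideal (MvPolynomial (Fin n × Fin n) ℝ)) : Set (MvPolynomial (Fin n × Fin n) ℝ)))) :=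
  permutation_summable_thOneExact' A hA
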